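/- Let k ≥ 3 be prime and let (G,γ) be a ℤ/kℤ-colored graph with n vertices and m edges. Then (G,γ) is cone-Laman if and only if its lift G̃ is Laman-sparse and has ñ = kn vertices and 2ñ − k edges (equivalently, m = 2n − 1 and every subgraph of G̃ with at least one edge, on n' vertices with m' edges, satisfies m' ≤ 2n' − 3). -/

import Mathlib

open Matrix

noncomputable section

/-- A `Γ`-colored directed multigraph: vertex set `Fin n`, edge set `Fin m`,
each edge `e` directed from `tail e` to `head e` with color `color e`. -/
structure CGraph (Γ : Type) where
  n : ℕ
  m : ℕ
  tail : Fin m → Fin n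
  head : Fin m → Fin n
  color : Fin m → Γ

namespace CGraph

variable {Γ : Type} [AddCommGroup Γ]

/-- The vertices spanned by a subset `S` of edges (the subgraph determined by `S`). -/
def verts (G : CGraph Γ) (S : Finset (Fin G.m)) : Finset (Fin G.n) :=
  S.image G.tail ∪ S.image G.head

/-- One step of a walk in the subgraph `S`, recorded together with the running gain:
an edge may be traversed forwards (adding its color) or backwards (subtracting it). -/
def liftStep (G : CGraph Γ) (S : Finset (Fin G.m)) (x y : Fin G.n × Γ) : Prop :=
  ∃ e ∈ S,
    (G.tail e = x.1 ∧ G.head e = y.1 ∧ y.2 = x.2 + G.color e) ∨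
    (G.head e = x.1 ∧ G.tail e = y.1 ∧ y.2 = x.2 - G.color e)

/-- The ρ-image of the component of `v` in the subgraph `S`: the subgroup of `Γ`
formed by the gains of closed walks in `S` based at `v`. -/
def gainGroup (G : CGraph Γ) (S : Finset (Fin G.m)) (v : Fin G.n) : AddSubgroup Γ :=
  AddSubgroup.closure {g : Γ | Relation.ReflTransGen (G.liftStep S) (v, 0) (v, g)}

/-- Adjacency (through an edge of `S`) on the vertices of the subgraph `S`. -/
def adj (G : CGraph Γ) (S : Finset (Fin G.m))
    (x y : {v : Fin G.n // v ∈ G.verts S}) : Prop :=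
  ∃ e ∈ S, (G.tail e = x.1 ∧ G.head e = y.1) ∨ (G.tail e = y.1 ∧ G.head e = x.1)

/-- The connected components of the subgraph `S`. -/
def comps (G : CGraph Γ) (S : Finset (Fin G.m)) : Type :=
  Quot (G.adj S)

/-- The component `x` of the subgraph `S` has trivial ρ-image. -/
def TrivComp (G : CGraph Γ) (S : Finset (Fin G.m)) (x : G.comps S) : Prop :=
  ∃ v, Quot.mk (G.adj S) v = x ∧ G.gainGroup S v.1 = ⊥

/-- The number of connected components of `S` with trivial ρ-image. -/
def c0 (G : CGraph Γ) (S : Finset (Fin G.m)) : ℕ :=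
  Nat.card {x : G.comps S // G.TrivComp S x}

/-- The number of connected components of `S` with nontrivial ρ-image. -/
def c1 (G : CGraph Γ) (S : Finset (Fin G.m)) : ℕ :=
  Nat.card {x : G.comps S // ¬ G.TrivComp S x}

/-- The total number of connected components of the subgraph `S`. -/
def numComps (G : CGraph Γ) (S : Finset (Fin G.m)) : ℕ :=
  Nat.card (G.comps S)

/-- `Λ(S)`: the subgroup of `Γ` generated by the ρ-images of all components of `S`. -/
def Lambda (G : CGraph Γ) (S : Finset (Fin G.m)) : AddSubgroup Γ :=
  ⨆ v ∈ G.verts S, G.gainGroup S v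

end CGraph

namespace CGraph

/-- Cone-Laman: `m = 2n - 1` edges and every subgraph satisfies
`m' ≤ 2n' - 3c'₀ - c'₁`. -/
def ConeLaman {k : ℕ} (G : CGraph (ZMod k)) : Prop :=
  (G.m : ℤ) = 2 * (G.n : ℤ) - 1 ∧
  ∀ S : Finset (Fin G.m), S.Nonempty →
    (S.card : ℤ) ≤ 2 * (G.verts S).card - 3 * (G.c0 S : ℤ) - (G.c1 S : ℤ)

end CGraph

namespace CGraph

/-- The vertices of the lift `G̃` spanned by a set `S` of lifted edges: the lifted
edge `(e, t)` joins `(tail e, t)` to `(head e, t + γ_e)`. -/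
def liftVerts {k : ℕ} (G : CGraph (ZMod k)) (S : Finset (Fin G.m × ZMod k)) :
    Finset (Fin G.n × ZMod k) :=
  S.image (fun x => (G.tail x.1, x.2)) ∪
    S.image (fun x => (G.head x.1, x.2 + G.color x.1))

/-- The lift `G̃` of `(G,γ)` is Laman-sparse: every nonempty set `S` of lifted edges
satisfies `|S| ≤ 2·|V(S)| - 3`. -/
def LiftLamanSparse {k : ℕ} (G : CGraph (ZMod k)) : Prop :=
  ∀ S : Finset (Fin G.m × ZMod k), S.Nonempty →
    (S.card : ℤ) ≤ 2 * (G.liftVerts S).card - 3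

end CGraph

namespace CGraph

variable {k : ℕ} {G : CGraph (ZMod k)}

lemma liftStep_symm' {S : Finset (Fin G.m)} {x y : Fin G.n × ZMod k}
    (h : G.liftStep S x y) : G.liftStep S y x := by
  obtain ⟨e, he, ⟨h1, h2, h3⟩ | ⟨h1, h2, h3⟩⟩ := h
  · exact ⟨e, he, Or.inr ⟨h2, h1, by rw [h3]; ring⟩⟩
  · exact ⟨e, he, Or.inl ⟨h2, h1, by rw [h3]; ring⟩⟩

lemma liftStep_shift {S : Finset (Fin G.m)} {x y : Fin G.n × ZMod k} (d : ZMod k)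
    (h : G.liftStep S x y) : G.liftStep S (x.1, x.2 + d) (y.1, y.2 + d) := by
  obtain ⟨e, he, ⟨h1, h2, h3⟩ | ⟨h1, h2, h3⟩⟩ := h
  · exact ⟨e, he, Or.inl ⟨h1, h2, by rw [h3]; ring⟩⟩
  · exact ⟨e, he, Or.inr ⟨h1, h2, by rw [h3]; ring⟩⟩

lemma reach_shift {S : Finset (Fin G.m)} {x y : Fin G.n × ZMod k} (d : ZMod k)
    (h : Relation.ReflTransGen (G.liftStep S) x y) :
    Relation.ReflTransGen (G.liftStep S) (x.1, x.2 + d) (y.1, y.2 + d) := by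
  induction h with
  | refl => exact .refl
  | tail _ h2 ih => exact ih.tail (liftStep_shift d h2)

lemma reach_symm {S : Finset (Fin G.m)} {x y : Fin G.n × ZMod k}
    (h : Relation.ReflTransGen (G.liftStep S) x y) :
    Relation.ReflTransGen (G.liftStep S) y x :=
  (@Relation.ReflTransGen.symmetric _ _ ⟨fun _ _ h' => liftStep_symm' h'⟩).symm _ _ h

lemma gain_unique {S : Finset (Fin G.m)} {v : Fin G.n} (hv : G.gainGroup S v = ⊥)
    {w : Fin G.n} {g g' : ZMod k}
    (h1 : Relation.ReflTransGen (G.liftStep S) (v, 0) (w, g))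
    (h2 : Relation.ReflTransGen (G.liftStep S) (v, 0) (w, g')) : g = g' := by
  have h4 : Relation.ReflTransGen (G.liftStep S) (w, g' + (g - g')) (v, 0 + (g - g')) :=
    reach_shift (g - g') (reach_symm h2)
  have e1 : g' + (g - g') = g := by ring
  have e2 : (0 : ZMod k) + (g - g') = g - g' := by ring
  rw [e1, e2] at h4
  have hmem : g - g' ∈ G.gainGroup S v := AddSubgroup.subset_closure (h1.trans h4)
  rw [hv, AddSubgroup.mem_bot] at hmem
  exact sub_eq_zero.mp hmem

lemma reach_of_eqvGen {S : Finset (Fin G.m)} {a b : {v : Fin G.n // v ∈ G.verts S}}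
    (h : Relation.EqvGen (G.adj S) a b) :
    ∀ s : ZMod k, ∃ t, Relation.ReflTransGen (G.liftStep S) (a.1, s) (b.1, t) := by
  induction h with
  | rel a b hab =>
    intro s
    obtain ⟨e, he, ⟨h1, h2⟩ | ⟨h1, h2⟩⟩ := hab
    · exact ⟨s + G.color e, Relation.ReflTransGen.single ⟨e, he, Or.inl ⟨h1, h2, rfl⟩⟩⟩
    · exact ⟨s - G.color e, Relation.ReflTransGen.single ⟨e, he, Or.inr ⟨h2, h1, rfl⟩⟩⟩
  | refl a => exact fun s => ⟨s, .refl⟩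
  | symm a b _ ih =>
    intro s
    obtain ⟨t, ht⟩ := ih 0
    have h4 : Relation.ReflTransGen (G.liftStep S) (b.1, t + (s - t)) (a.1, 0 + (s - t)) :=
      reach_shift _ (reach_symm ht)
    have e1 : t + (s - t) = s := by ring
    rw [e1] at h4
    exact ⟨0 + (s - t), h4⟩
  | trans a b c _ _ ih1 ih2 =>
    intro s
    obtain ⟨t, ht⟩ := ih1 s
    obtain ⟨u, hu⟩ := ih2 t
    exact ⟨u, ht.trans hu⟩

lemma reach_invariant {S : Finset (Fin G.m)} (σ : Fin G.n → ZMod k) (dd : ZMod k)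
    (hσ : ∀ e ∈ S, σ (G.head e) = σ (G.tail e) + dd * G.color e)
    {x y : Fin G.n × ZMod k} (h : Relation.ReflTransGen (G.liftStep S) x y) :
    dd * y.2 - σ y.1 = dd * x.2 - σ x.1 := by
  induction h with
  | refl => rfl
  | tail _ hstep ih =>
    obtain ⟨e, he, ⟨h1, h2, h3⟩ | ⟨h1, h2, h3⟩⟩ := hstep
    · have h5 : σ (G.head e) = σ (G.tail e) + dd * G.color e := hσ e he
      rw [h3, ← h2, h5, h1, ← ih]; ring
    · have h5 : σ (G.tail e) = σ (G.head e) - dd * G.color e := by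
        rw [hσ e he]; ring
      rw [h3, ← h2, h5, h1, ← ih]; ring

lemma gainGroup_eq_bot_of_pot {S : Finset (Fin G.m)} (σ : Fin G.n → ZMod k) (dd : ZMod k)
    (hdd : ∀ g : ZMod k, dd * g = 0 → g = 0)
    (hσ : ∀ e ∈ S, σ (G.head e) = σ (G.tail e) + dd * G.color e) (v : Fin G.n) :
    G.gainGroup S v = ⊥ := by
  rw [gainGroup, AddSubgroup.closure_eq_bot_iff]
  intro g hg
  have h2 := reach_invariant σ dd hσ hg
  have h3 : dd * g = dd * 0 := sub_left_inj.mp h2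
  rw [mul_zero] at h3
  simp [hdd g h3]

instance {Γ : Type} [AddCommGroup Γ] (G : CGraph Γ) (S : Finset (Fin G.m)) :
    Finite (G.comps S) :=
  Finite.of_surjective _ Quot.mk_surjective

lemma mem_verts_iff {Γ : Type} [AddCommGroup Γ] {G : CGraph Γ} {S : Finset (Fin G.m)}
    {w : Fin G.n} : w ∈ G.verts S ↔ ∃ e ∈ S, G.tail e = w ∨ G.head e = w := by
  simp only [verts, Finset.mem_union, Finset.mem_image]
  constructor
  · rintro (⟨e, he, h⟩ | ⟨e, he, h⟩)
    exacts [⟨e, he, Or.inl h⟩, ⟨e, he, Or.inr h⟩]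
  · rintro ⟨e, he, h | h⟩
    exacts [Or.inl ⟨e, he, h⟩, Or.inr ⟨e, he, h⟩]

lemma comps_nonempty {S : Finset (Fin G.m)} (hS : S.Nonempty) : Nonempty (G.comps S) := by
  obtain ⟨e, he⟩ := hS
  have hv : G.tail e ∈ G.verts S := mem_verts_iff.mpr ⟨e, he, Or.inl rfl⟩
  exact ⟨Quot.mk _ ⟨_, hv⟩⟩

lemma triv_of_all_bot {S : Finset (Fin G.m)} (h : ∀ v, G.gainGroup S v = ⊥)
    (x : G.comps S) : G.TrivComp S x := by
  obtain ⟨v, rfl⟩ := Quot.exists_rep x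
  exact ⟨v, rfl, h v.1⟩

lemma three_le_of_all_bot {S : Finset (Fin G.m)} (hS : S.Nonempty)
    (h : ∀ v, G.gainGroup S v = ⊥) : 3 ≤ 3 * G.c0 S + G.c1 S := by
  have hne := comps_nonempty (G := G) hS
  haveI : Nonempty {x : G.comps S // G.TrivComp S x} :=
    ⟨⟨Classical.arbitrary _, triv_of_all_bot h _⟩⟩
  have h1 : 1 ≤ G.c0 S := Nat.card_pos
  omega

lemma one_le_comps_count {S : Finset (Fin G.m)} (hS : S.Nonempty) :
    1 ≤ 3 * G.c0 S + G.c1 S := by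
  have hne := comps_nonempty (G := G) hS
  obtain ⟨x⟩ := hne
  by_cases hx : G.TrivComp S x
  · haveI : Nonempty {y : G.comps S // G.TrivComp S y} := ⟨⟨x, hx⟩⟩
    have : 1 ≤ G.c0 S := Nat.card_pos
    omega
  · haveI : Nonempty {y : G.comps S // ¬ G.TrivComp S y} := ⟨⟨x, hx⟩⟩
    have : 1 ≤ G.c1 S := Nat.card_pos
    omega

end CGraph

namespace CGraph

variable {k : ℕ} {G : CGraph (ZMod k)}

lemma cone_of_sparse (hk : 3 ≤ k) (hsp : G.LiftLamanSparse)
    (S : Finset (Fin G.m)) (hS : S.Nonempty) :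
    (S.card : ℤ) ≤ 2 * ((G.verts S).card : ℤ) - 3 * (G.c0 S : ℤ) - (G.c1 S : ℤ) := by
  classical
  haveI : NeZero k := ⟨by omega⟩
  haveI := Fintype.ofFinite (G.comps S)
  obtain ⟨x0⟩ := comps_nonempty (G := G) hS
  set cOf : Fin G.m → G.comps S :=
    fun e => if h : G.tail e ∈ G.verts S then Quot.mk _ ⟨_, h⟩ else x0 with hcOf
  set vOf : Fin G.n → G.comps S :=
    fun w => if h : w ∈ G.verts S then Quot.mk _ ⟨w, h⟩ else x0 with hvOf
  have hvOfval : ∀ (w : Fin G.n) (h : w ∈ G.verts S), vOf w = Quot.mk (G.adj S) ⟨w, h⟩ := by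
    intro w h; simp only [hvOf]; exact dif_pos h
  have hc : ∀ e ∈ S, ∀ (w : Fin G.n), (G.tail e = w ∨ G.head e = w) → cOf e = vOf w := by
    intro e he w hw
    have hwv : w ∈ G.verts S := mem_verts_iff.mpr ⟨e, he, hw⟩
    have htv : G.tail e ∈ G.verts S := mem_verts_iff.mpr ⟨e, he, Or.inl rfl⟩
    have hcv : cOf e = Quot.mk (G.adj S) ⟨G.tail e, htv⟩ := by
      simp only [hcOf]; exact dif_pos htv
    rw [hcv, hvOfval w hwv]
    rcases hw with h | h
    · exact congrArg _ (Subtype.ext h)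
    · exact Quot.sound ⟨e, he, Or.inl ⟨rfl, h⟩⟩
  set Sx : G.comps S → Finset (Fin G.m) := fun x => S.filter (fun e => cOf e = x) with hSx
  set Vx : G.comps S → Finset (Fin G.n) := fun x => (G.verts S).filter (fun w => vOf w = x) with hVx
  have hSxS : ∀ x, Sx x ⊆ S := fun x => Finset.filter_subset _ _
  have hverts : ∀ x, G.verts (Sx x) = Vx x := by
    intro x
    ext w
    simp only [hVx, Finset.mem_filter]
    constructor
    · intro hw
      obtain ⟨e, he, hor⟩ := mem_verts_iff.mp hw
      have heS : e ∈ S := (Finset.mem_filter.mp he).1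
      have hex : cOf e = x := (Finset.mem_filter.mp he).2
      exact ⟨mem_verts_iff.mpr ⟨e, heS, hor⟩, by rw [← hc e heS w hor, hex]⟩
    · rintro ⟨hw, hx⟩
      obtain ⟨e, he, hor⟩ := mem_verts_iff.mp hw
      have hcex : cOf e = x := by rw [hc e he w hor, hx]
      exact mem_verts_iff.mpr ⟨e, Finset.mem_filter.mpr ⟨he, hcex⟩, hor⟩
  have hSxne : ∀ x, (Sx x).Nonempty := by
    intro x
    obtain ⟨v, hvx⟩ := Quot.exists_rep x
    obtain ⟨e, he, hor⟩ := mem_verts_iff.mp v.2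
    refine ⟨e, Finset.mem_filter.mpr ⟨he, ?_⟩⟩
    rw [hc e he v.1 hor, hvOfval v.1 v.2, ← hvx]
  have hbound : ∀ x, ((Sx x).card : ℤ) ≤
      2 * ((Vx x).card : ℤ) - (if G.TrivComp S x then (3:ℤ) else 1) := by
    intro x
    by_cases htriv : G.TrivComp S x
    · rw [if_pos htriv]
      obtain ⟨v0, hv0x, hbot⟩ := htriv
      have hreach : ∀ w ∈ Vx x, ∃ g, Relation.ReflTransGen (G.liftStep S) (v0.1, 0) (w, g) := by
        intro w hw
        obtain ⟨hwS, hwx⟩ := Finset.mem_filter.mp hw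
        have hq : Quot.mk (G.adj S) ⟨w, hwS⟩ = Quot.mk (G.adj S) v0 := by
          rw [← hvOfval w hwS, hwx, ← hv0x]
        have heq : Relation.EqvGen (G.adj S) v0 ⟨w, hwS⟩ :=
          Relation.EqvGen.symm _ _ (Quot.eq.mp hq)
        exact reach_of_eqvGen heq 0
      set φ : Fin G.n → ZMod k := fun w =>
        if h : ∃ g, Relation.ReflTransGen (G.liftStep S) (v0.1, 0) (w, g) then h.choose
        else 0 with hφ
      have hφspec : ∀ w ∈ Vx x, Relation.ReflTransGen (G.liftStep S) (v0.1, 0) (w, φ w) := by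
        intro w hw
        have h := hreach w hw
        simp only [hφ]; rw [dif_pos h]; exact h.choose_spec
      have hcompat : ∀ e ∈ Sx x, φ (G.head e) = φ (G.tail e) + G.color e := by
        intro e he
        have heS : e ∈ S := hSxS x he
        have htl : G.tail e ∈ Vx x := by
          rw [← hverts x]; exact mem_verts_iff.mpr ⟨e, he, Or.inl rfl⟩
        have hhd : G.head e ∈ Vx x := by
          rw [← hverts x]; exact mem_verts_iff.mpr ⟨e, he, Or.inr rfl⟩
        have r2 : Relation.ReflTransGen (G.liftStep S) (v0.1, 0)
            (G.head e, φ (G.tail e) + G.color e) :=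
          (hφspec _ htl).tail ⟨e, heS, Or.inl ⟨rfl, rfl, rfl⟩⟩
        exact gain_unique hbot (hφspec _ hhd) r2
      set Ct : Finset (Fin G.m × ZMod k) := (Sx x).image (fun e => (e, φ (G.tail e))) with hCt
      have hCtcard : Ct.card = (Sx x).card :=
        Finset.card_image_of_injective _ (fun a b hab => (Prod.ext_iff.mp hab).1)
      have hCtne : Ct.Nonempty := (hSxne x).image _
      have hsub : G.liftVerts Ct ⊆ (Vx x).image (fun w => (w, φ w)) := by
        intro p hp
        simp only [liftVerts, Finset.mem_union, Finset.mem_image] at hp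
        obtain (⟨q, hq, rfl⟩ | ⟨q, hq, rfl⟩) := hp
        · obtain ⟨e, he, rfl⟩ := Finset.mem_image.mp hq
          have htl : G.tail e ∈ Vx x := by
            rw [← hverts x]; exact mem_verts_iff.mpr ⟨e, he, Or.inl rfl⟩
          exact Finset.mem_image.mpr ⟨_, htl, rfl⟩
        · obtain ⟨e, he, rfl⟩ := Finset.mem_image.mp hq
          have hhd : G.head e ∈ Vx x := by
            rw [← hverts x]; exact mem_verts_iff.mpr ⟨e, he, Or.inr rfl⟩
          refine Finset.mem_image.mpr ⟨_, hhd, ?_⟩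
          simp only []
          rw [hcompat e he]
      have hsp1 := hsp Ct hCtne
      have hcard2 : (G.liftVerts Ct).card ≤ (Vx x).card :=
        le_trans (Finset.card_le_card hsub) Finset.card_image_le
      have hcast : ((G.liftVerts Ct).card : ℤ) ≤ ((Vx x).card : ℤ) := Nat.cast_le.mpr hcard2
      rw [hCtcard] at hsp1
      linarith
    · rw [if_neg htriv]
      set Ct : Finset (Fin G.m × ZMod k) := (Sx x) ×ˢ (Finset.univ : Finset (ZMod k)) with hCt
      have hCtcard : Ct.card = (Sx x).card * k := by
        rw [hCt, Finset.card_product, Finset.card_univ, ZMod.card]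
      have hCtne : Ct.Nonempty := (hSxne x).product ⟨0, Finset.mem_univ 0⟩
      have hsub : G.liftVerts Ct ⊆ (Vx x) ×ˢ (Finset.univ : Finset (ZMod k)) := by
        intro p hp
        simp only [liftVerts, Finset.mem_union, Finset.mem_image] at hp
        obtain (⟨q, hq, rfl⟩ | ⟨q, hq, rfl⟩) := hp
        · have hq1 : q.1 ∈ Sx x := (Finset.mem_product.mp hq).1
          refine Finset.mem_product.mpr ⟨?_, Finset.mem_univ _⟩
          rw [← hverts x]; exact mem_verts_iff.mpr ⟨q.1, hq1, Or.inl rfl⟩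
        · have hq1 : q.1 ∈ Sx x := (Finset.mem_product.mp hq).1
          refine Finset.mem_product.mpr ⟨?_, Finset.mem_univ _⟩
          rw [← hverts x]; exact mem_verts_iff.mpr ⟨q.1, hq1, Or.inr rfl⟩
      have hsp1 := hsp Ct hCtne
      have hcard2 : ((G.liftVerts Ct).card : ℤ) ≤ ((Vx x).card : ℤ) * k := by
        have h1 : (G.liftVerts Ct).card ≤ (Vx x).card * k := by
          refine le_trans (Finset.card_le_card hsub) ?_
          rw [Finset.card_product, Finset.card_univ, ZMod.card]
        exact_mod_cast Nat.cast_le.mpr h1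
      rw [hCtcard] at hsp1
      push_cast at hsp1
      by_contra hcon
      push_neg at hcon
      have h2b : 2 * ((Vx x).card : ℤ) ≤ ((Sx x).card : ℤ) := by linarith
      have h3 : 2 * ((Vx x).card : ℤ) * k ≤ ((Sx x).card : ℤ) * k :=
        mul_le_mul_of_nonneg_right h2b (by positivity)
      linarith
  -- assemble
  have hcards : S.card = ∑ x : G.comps S, (Sx x).card :=
    Finset.card_eq_sum_card_fiberwise (fun e _ => Finset.mem_univ _)
  have hvcards : (G.verts S).card = ∑ x : G.comps S, (Vx x).card :=
    Finset.card_eq_sum_card_fiberwise (fun w _ => Finset.mem_univ _)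
  have hc0 : (G.c0 S : ℤ) = ((Finset.univ.filter (fun x => G.TrivComp S x)).card : ℤ) := by
    rw [c0, Nat.card_eq_fintype_card, Fintype.card_subtype]
  have hc1 : (G.c1 S : ℤ) = ((Finset.univ.filter (fun x => ¬ G.TrivComp S x)).card : ℤ) := by
    rw [c1, Nat.card_eq_fintype_card, Fintype.card_subtype]
  have hwsum : ∑ x : G.comps S, (if G.TrivComp S x then (3:ℤ) else 1) =
      3 * (G.c0 S : ℤ) + (G.c1 S : ℤ) := by
    rw [Finset.sum_ite, Finset.sum_const, Finset.sum_const, hc0, hc1]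
    ring
  have hfinal : (S.card : ℤ) ≤ ∑ x : G.comps S,
      (2 * ((Vx x).card : ℤ) - (if G.TrivComp S x then (3:ℤ) else 1)) := by
    rw [hcards]
    push_cast
    exact Finset.sum_le_sum (fun x _ => hbound x)
  rw [Finset.sum_sub_distrib, ← Finset.mul_sum, hwsum] at hfinal
  have hvc : ((G.verts S).card : ℤ) = ∑ x : G.comps S, ((Vx x).card : ℤ) := by
    exact_mod_cast hvcards
  rw [← hvc] at hfinal
  linarith

end CGraph

namespace CGraph

variable {k : ℕ} {G : CGraph (ZMod k)}

lemma sparse_of_cone (hp : Nat.Prime k) (hk : 3 ≤ k)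
    (hcone : ∀ S : Finset (Fin G.m), S.Nonempty →
      (S.card : ℤ) ≤ 2 * ((G.verts S).card : ℤ) - 3 * (G.c0 S : ℤ) - (G.c1 S : ℤ)) :
    G.LiftLamanSparse := by
  classical
  haveI : NeZero k := ⟨by omega⟩
  haveI : Fact (Nat.Prime k) := ⟨hp⟩
  intro C hC
  set mult : Fin G.m → ℕ := fun e => (C.filter (fun x => x.1 = e)).card with hmultdef
  set B : Finset (Fin G.m) := C.image Prod.fst with hBdef
  set H : ℕ → Finset (Fin G.m) := fun j => B.filter (fun e => j ≤ mult e) with hHdef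
  set ν : Fin G.n → ℕ := fun w => ((G.liftVerts C).filter (fun p => p.1 = w)).card with hνdef
  set W : Finset (Fin G.n) := (G.liftVerts C).image Prod.fst with hWdef
  set J : Finset ℕ := Finset.Icc 1 k with hJdef
  set lv : Fin G.n → ℕ := fun w => (J.filter (fun j => w ∈ G.verts (H j))).card with hlvdef
  have hliftmem1 : ∀ x ∈ C, (G.tail x.1, x.2) ∈ G.liftVerts C := fun x hx =>
    Finset.mem_union_left _ (Finset.mem_image_of_mem _ hx)
  have hliftmem2 : ∀ x ∈ C, (G.head x.1, x.2 + G.color x.1) ∈ G.liftVerts C := fun x hx =>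
    Finset.mem_union_right _ (Finset.mem_image_of_mem _ hx)
  have hmultk : ∀ e, mult e ≤ k := by
    intro e
    have h1 : (C.filter (fun x => x.1 = e)).card ≤ (Finset.univ : Finset (ZMod k)).card := by
      refine Finset.card_le_card_of_injOn Prod.snd (fun a _ => Finset.mem_univ _) ?_
      intro a ha b hb hab
      have ha1 : a.1 = e := (Finset.mem_filter.mp (Finset.mem_coe.mp ha)).2
      have hb1 : b.1 = e := (Finset.mem_filter.mp (Finset.mem_coe.mp hb)).2
      exact Prod.ext (ha1.trans hb1.symm) hab
    rw [Finset.card_univ, ZMod.card] at h1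
    simpa only [hmultdef] using h1
  have hmult1 : ∀ e ∈ B, 1 ≤ mult e := by
    intro e he
    obtain ⟨x, hx, rfl⟩ := Finset.mem_image.mp (hBdef ▸ he)
    simp only [hmultdef]
    exact Finset.card_pos.mpr ⟨x, Finset.mem_filter.mpr ⟨hx, rfl⟩⟩
  have hHB : ∀ j, H j ⊆ B := fun j => Finset.filter_subset _ _
  have hHanti : ∀ {i j : ℕ}, i ≤ j → H j ⊆ H i := by
    intro i j hij e he
    obtain ⟨h1, h2⟩ := Finset.mem_filter.mp he
    exact Finset.mem_filter.mpr ⟨h1, le_trans hij h2⟩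
  have hvmono : ∀ {S S' : Finset (Fin G.m)}, S ⊆ S' → G.verts S ⊆ G.verts S' := by
    intro S S' hss w hw
    obtain ⟨e, he, hor⟩ := mem_verts_iff.mp hw
    exact mem_verts_iff.mpr ⟨e, hss he, hor⟩
  have hCcard : C.card = ∑ e ∈ B, mult e :=
    Finset.card_eq_sum_card_fiberwise (fun x hx => Finset.mem_image_of_mem _ hx)
  have hHsum : ∑ j ∈ J, (H j).card = C.card := by
    have h1 : ∀ j, (H j).card = ∑ e ∈ B, (if j ≤ mult e then 1 else 0) := by
      intro j
      simp only [hHdef]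
      exact Finset.card_filter _ _
    calc ∑ j ∈ J, (H j).card
        = ∑ j ∈ J, ∑ e ∈ B, (if j ≤ mult e then 1 else 0) :=
          Finset.sum_congr rfl (fun j _ => h1 j)
      _ = ∑ e ∈ B, ∑ j ∈ J, (if j ≤ mult e then 1 else 0) := Finset.sum_comm
      _ = ∑ e ∈ B, mult e := by
          refine Finset.sum_congr rfl (fun e _ => ?_)
          rw [← Finset.card_filter]
          have hf : J.filter (fun j => j ≤ mult e) = Finset.Icc 1 (mult e) := by
            rw [hJdef]
            ext j
            simp only [Finset.mem_filter, Finset.mem_Icc]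
            have := hmultk e
            omega
          rw [hf, Nat.card_Icc]
          omega
      _ = C.card := hCcard.symm
  have hnusum : (G.liftVerts C).card = ∑ w ∈ W, ν w :=
    Finset.card_eq_sum_card_fiberwise (fun p hp' => Finset.mem_image_of_mem _ hp')
  have hvertsW : ∀ j, G.verts (H j) ⊆ W := by
    intro j w hw
    obtain ⟨e, he, hor⟩ := mem_verts_iff.mp hw
    obtain ⟨x, hx, hx1⟩ := Finset.mem_image.mp (hBdef ▸ hHB j he)
    rcases hor with h | h
    · exact Finset.mem_image.mpr ⟨(G.tail x.1, x.2), hliftmem1 x hx, by rw [hx1, h]⟩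
    · exact Finset.mem_image.mpr ⟨(G.head x.1, x.2 + G.color x.1), hliftmem2 x hx, by rw [hx1, h]⟩
  have hlev : ∀ j w, w ∈ G.verts (H j) → j ≤ ν w := by
    intro j w hw
    obtain ⟨e, he, hor⟩ := mem_verts_iff.mp hw
    have hm : j ≤ mult e := (Finset.mem_filter.mp he).2
    simp only [hmultdef] at hm
    refine le_trans hm ?_
    simp only [hνdef]
    rcases hor with h | h
    · refine Finset.card_le_card_of_injOn (fun x => (w, x.2)) ?_ ?_
      · intro x hx
        obtain ⟨hxC, hx1⟩ := Finset.mem_filter.mp hx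
        show (w, x.2) ∈ Finset.filter (fun p => p.1 = w) (G.liftVerts C)
        refine Finset.mem_filter.mpr ⟨?_, rfl⟩
        have := hliftmem1 x hxC
        rwa [hx1, h] at this
      · intro a ha b hb hab
        have ha1 : a.1 = e := (Finset.mem_filter.mp (Finset.mem_coe.mp ha)).2
        have hb1 : b.1 = e := (Finset.mem_filter.mp (Finset.mem_coe.mp hb)).2
        have h2 : a.2 = b.2 := by simpa using congrArg Prod.snd hab
        exact Prod.ext (ha1.trans hb1.symm) h2
    · refine Finset.card_le_card_of_injOn (fun x => (w, x.2 + G.color x.1)) ?_ ?_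
      · intro x hx
        obtain ⟨hxC, hx1⟩ := Finset.mem_filter.mp hx
        show (w, x.2 + G.color x.1) ∈ Finset.filter (fun p => p.1 = w) (G.liftVerts C)
        rw [hx1]
        refine Finset.mem_filter.mpr ⟨?_, rfl⟩
        have := hliftmem2 x hxC
        rwa [hx1, h] at this
      · intro a ha b hb hab
        have ha1 : a.1 = e := (Finset.mem_filter.mp (Finset.mem_coe.mp ha)).2
        have hb1 : b.1 = e := (Finset.mem_filter.mp (Finset.mem_coe.mp hb)).2
        have h2 : a.2 + G.color a.1 = b.2 + G.color b.1 := by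
          simpa using congrArg Prod.snd hab
        rw [ha1, hb1] at h2
        exact Prod.ext (ha1.trans hb1.symm) (add_right_cancel h2)
  have hvlv : ∑ j ∈ J, (G.verts (H j)).card = ∑ w ∈ W, lv w := by
    have h1 : ∀ j, (G.verts (H j)).card = ∑ w ∈ W, (if w ∈ G.verts (H j) then 1 else 0) := by
      intro j
      have h2 : W.filter (fun w => w ∈ G.verts (H j)) = G.verts (H j) := by
        ext w
        simp only [Finset.mem_filter]
        exact ⟨And.right, fun h => ⟨hvertsW j h, h⟩⟩
      conv_lhs => rw [← h2]
      exact Finset.card_filter _ _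
    calc ∑ j ∈ J, (G.verts (H j)).card
        = ∑ j ∈ J, ∑ w ∈ W, (if w ∈ G.verts (H j) then 1 else 0) :=
          Finset.sum_congr rfl (fun j _ => h1 j)
      _ = ∑ w ∈ W, ∑ j ∈ J, (if w ∈ G.verts (H j) then 1 else 0) := Finset.sum_comm
      _ = ∑ w ∈ W, lv w := by
          refine Finset.sum_congr rfl (fun w _ => ?_)
          simp only [hlvdef]
          exact (Finset.card_filter _ _).symm
  have hlvnu : ∀ w, lv w ≤ ν w := by
    intro w
    have hsub : J.filter (fun j => w ∈ G.verts (H j)) ⊆ Finset.Icc 1 (ν w) := by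
      intro j hj
      obtain ⟨hjJ, hjw⟩ := Finset.mem_filter.mp hj
      rw [hJdef] at hjJ
      have h1 : 1 ≤ j := (Finset.mem_Icc.mp hjJ).1
      exact Finset.mem_Icc.mpr ⟨h1, hlev j w hjw⟩
    simp only [hlvdef]
    refine le_trans (Finset.card_le_card hsub) ?_
    rw [Nat.card_Icc]
    omega
  -- the potential function
  set σ : Fin G.n → ZMod k := fun w =>
    (((G.liftVerts C).filter (fun p => p.1 = w)).image Prod.snd).sum id with hσdef
  have hinjV : ∀ u : Fin G.n,
      Set.InjOn Prod.snd (((G.liftVerts C).filter (fun p => p.1 = u) : Finset (Fin G.n × ZMod k)) :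
        Set (Fin G.n × ZMod k)) := by
    intro u a ha b hb hab
    have ha1 : a.1 = u := (Finset.mem_filter.mp (Finset.mem_coe.mp ha)).2
    have hb1 : b.1 = u := (Finset.mem_filter.mp (Finset.mem_coe.mp hb)).2
    exact Prod.ext (ha1.trans hb1.symm) hab
  have hkey : ∀ (d : ℕ) (e : Fin G.m), e ∈ B → mult e = d → ν (G.tail e) = d →
      ν (G.head e) = d → σ (G.head e) = σ (G.tail e) + (d : ZMod k) * G.color e := by
    intro d e _ hmd hνt hνh
    set F := C.filter (fun x => x.1 = e) with hF
    set T := F.image Prod.snd with hT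
    have hinjF : Set.InjOn Prod.snd ((F : Finset (Fin G.m × ZMod k)) :
        Set (Fin G.m × ZMod k)) := by
      intro a ha b hb hab
      have ha1 : a.1 = e := (Finset.mem_filter.mp (Finset.mem_coe.mp ha)).2
      have hb1 : b.1 = e := (Finset.mem_filter.mp (Finset.mem_coe.mp hb)).2
      exact Prod.ext (ha1.trans hb1.symm) hab
    have hFcard : F.card = mult e := by simp only [hmultdef, hF]
    have hTcard : T.card = d := by
      rw [hT, Finset.card_image_of_injOn hinjF, hFcard, hmd]
    set Lt := ((G.liftVerts C).filter (fun p => p.1 = G.tail e)).image Prod.snd with hLt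
    set Lh := ((G.liftVerts C).filter (fun p => p.1 = G.head e)).image Prod.snd with hLh
    have hLtcard : Lt.card = d := by
      rw [hLt, Finset.card_image_of_injOn (hinjV _)]
      simp only [hνdef] at hνt
      exact hνt
    have hLhcard : Lh.card = d := by
      rw [hLh, Finset.card_image_of_injOn (hinjV _)]
      simp only [hνdef] at hνh
      exact hνh
    have hTsubLt : T ⊆ Lt := by
      intro t ht
      obtain ⟨x, hxF, rfl⟩ := Finset.mem_image.mp (hT ▸ ht)
      obtain ⟨hxC, hx1⟩ := Finset.mem_filter.mp (hF ▸ hxF)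
      rw [hLt]
      refine Finset.mem_image.mpr ⟨(G.tail e, x.2), Finset.mem_filter.mpr ⟨?_, rfl⟩, rfl⟩
      have := hliftmem1 x hxC
      rwa [hx1] at this
    have hTLt : T = Lt := Finset.eq_of_subset_of_card_le hTsubLt (by rw [hTcard, hLtcard])
    set T2 := T.image (fun t => t + G.color e) with hT2
    have hT2card : T2.card = d := by
      rw [hT2, Finset.card_image_of_injective _ (add_left_injective _), hTcard]
    have hT2subLh : T2 ⊆ Lh := by
      intro t ht
      obtain ⟨t0, ht0, rfl⟩ := Finset.mem_image.mp (hT2 ▸ ht)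
      obtain ⟨x, hxF, rfl⟩ := Finset.mem_image.mp (hT ▸ ht0)
      obtain ⟨hxC, hx1⟩ := Finset.mem_filter.mp (hF ▸ hxF)
      rw [hLh]
      refine Finset.mem_image.mpr ⟨(G.head e, x.2 + G.color e),
        Finset.mem_filter.mpr ⟨?_, rfl⟩, rfl⟩
      have := hliftmem2 x hxC
      rwa [hx1] at this
    have hT2Lh : T2 = Lh := Finset.eq_of_subset_of_card_le hT2subLh (by rw [hT2card, hLhcard])
    have hsums : Lh.sum id = Lt.sum id + (d : ZMod k) * G.color e := by
      rw [← hT2Lh, ← hTLt, hT2]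
      rw [Finset.sum_image (fun a _ b _ h => add_left_injective _ h)]
      simp only [id_eq]
      rw [Finset.sum_add_distrib, Finset.sum_const, hTcard, nsmul_eq_mul]
    simp only [hσdef]
    rw [← hLt, ← hLh]
    exact hsums
  -- per-level cone bound
  set P : ℕ → ℤ := fun j =>
    if (H j).Nonempty then 3 * (G.c0 (H j) : ℤ) + (G.c1 (H j) : ℤ) else 0 with hPdef
  have hstep : ∀ j, ((H j).card : ℤ) ≤ 2 * ((G.verts (H j)).card : ℤ) - P j := by
    intro j
    by_cases hne : (H j).Nonempty
    · simp only [hPdef, if_pos hne]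
      have := hcone (H j) hne
      linarith
    · simp only [hPdef, if_neg hne]
      rw [Finset.not_nonempty_iff_eq_empty] at hne
      rw [hne]
      simp [verts]
  have hPnonneg : ∀ j ∈ J, 0 ≤ P j := by
    intro j _
    simp only [hPdef]
    split
    · positivity
    · exact le_refl 0
  have hH1ne : (H 1).Nonempty := by
    obtain ⟨x, hx⟩ := hC
    have hxB : x.1 ∈ B := by rw [hBdef]; exact Finset.mem_image_of_mem _ hx
    exact ⟨x.1, Finset.mem_filter.mpr ⟨hxB, hmult1 _ hxB⟩⟩
  have h1J : (1 : ℕ) ∈ J := by rw [hJdef]; exact Finset.mem_Icc.mpr ⟨le_refl 1, by omega⟩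
  have h2J : (2 : ℕ) ∈ J := by rw [hJdef]; exact Finset.mem_Icc.mpr ⟨by omega, by omega⟩
  have h3J : (3 : ℕ) ∈ J := by rw [hJdef]; exact Finset.mem_Icc.mpr ⟨by omega, by omega⟩
  have hPge1 : ∀ j, (H j).Nonempty → (1 : ℤ) ≤ P j := by
    intro j hne
    simp only [hPdef, if_pos hne]
    have := one_le_comps_count (G := G) hne
    exact_mod_cast this
  -- the key inequality
  have hKEY : (3:ℤ) ≤ 2 * ((∑ w ∈ W, (ν w : ℤ)) - ∑ w ∈ W, (lv w : ℤ)) + ∑ j ∈ J, P j := by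
    have hDpos : ∑ w ∈ W, (lv w : ℤ) ≤ ∑ w ∈ W, (ν w : ℤ) :=
      Finset.sum_le_sum (fun w _ => by exact_mod_cast hlvnu w)
    by_contra hcon
    push_neg at hcon
    have hPsum1 : (1:ℤ) ≤ ∑ j ∈ J, P j :=
      le_trans (hPge1 1 hH1ne) (Finset.single_le_sum hPnonneg h1J)
    have hD0 : ∑ w ∈ W, (ν w : ℤ) = ∑ w ∈ W, (lv w : ℤ) := le_antisymm (by linarith) hDpos
    have hTle2 : ∑ j ∈ J, P j ≤ 2 := by linarith
    have hνlv : ∀ w ∈ W, ν w = lv w := by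
      have h1 := (Finset.sum_eq_sum_iff_of_le
        (fun w (_ : w ∈ W) => by exact_mod_cast hlvnu w)).mp hD0.symm
      intro w hw
      exact_mod_cast (h1 w hw).symm
    by_cases hH2 : (H 2).Nonempty
    · by_cases hH3 : (H 3).Nonempty
      · have hsub123 : ({1, 2, 3} : Finset ℕ) ⊆ J := by
          intro j hj
          simp only [Finset.mem_insert, Finset.mem_singleton] at hj
          rcases hj with rfl | rfl | rfl
          exacts [h1J, h2J, h3J]
        have hle : ∑ j ∈ ({1,2,3} : Finset ℕ), P j ≤ ∑ j ∈ J, P j :=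
          Finset.sum_le_sum_of_subset_of_nonneg hsub123 (fun j hj _ => hPnonneg j hj)
        rw [Finset.sum_insert (by decide), Finset.sum_insert (by decide),
          Finset.sum_singleton] at hle
        have := hPge1 1 hH1ne
        have := hPge1 2 hH2
        have := hPge1 3 hH3
        linarith
      · rw [Finset.not_nonempty_iff_eq_empty] at hH3
        have hmult2 : ∀ e ∈ H 2, mult e = 2 := by
          intro e he
          have h2 : 2 ≤ mult e := (Finset.mem_filter.mp he).2
          have h3 : ¬ (3 ≤ mult e) := by
            intro hcontra
            have hmem : e ∈ H 3 :=
              Finset.mem_filter.mpr ⟨(Finset.mem_filter.mp he).1, hcontra⟩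
            rw [hH3] at hmem
            exact absurd hmem (Finset.notMem_empty e)
          omega
        have hν2 : ∀ w ∈ G.verts (H 2), ν w = 2 := by
          intro w hw
          rw [hνlv w (hvertsW 2 hw)]
          simp only [hlvdef]
          have hfil : J.filter (fun j => w ∈ G.verts (H j)) = {1, 2} := by
            ext j
            simp only [Finset.mem_filter, Finset.mem_insert, Finset.mem_singleton]
            constructor
            · rintro ⟨hjJ, hjw⟩
              rw [hJdef, Finset.mem_Icc] at hjJ
              by_contra hne'
              push_neg at hne'
              have h3lej : 3 ≤ j := by omega
              have hsub := hHanti h3lej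
              rw [hH3] at hsub
              obtain ⟨e, he, _⟩ := mem_verts_iff.mp hjw
              exact absurd (hsub he) (Finset.notMem_empty e)
            · rintro (rfl | rfl)
              · exact ⟨h1J, hvmono (hHanti (by omega)) hw⟩
              · exact ⟨h2J, hw⟩
          rw [hfil]
          decide
        have hbot : ∀ v, G.gainGroup (H 2) v = ⊥ := by
          refine fun v => gainGroup_eq_bot_of_pot σ (2 : ZMod k) ?_ ?_ v
          · intro g hg
            have h2ne : (2 : ZMod k) ≠ 0 := by
              intro h0
              have h0' : ((2:ℕ) : ZMod k) = 0 := by exact_mod_cast h0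
              rw [ZMod.natCast_eq_zero_iff] at h0'
              have := Nat.le_of_dvd (by norm_num) h0'
              omega
            rcases mul_eq_zero.mp hg with h | h
            · exact absurd h h2ne
            · exact h
          · intro e he
            have heB : e ∈ B := hHB 2 he
            have ht2 : G.tail e ∈ G.verts (H 2) := mem_verts_iff.mpr ⟨e, he, Or.inl rfl⟩
            have hh2 : G.head e ∈ G.verts (H 2) := mem_verts_iff.mpr ⟨e, he, Or.inr rfl⟩
            have hres := hkey 2 e heB (hmult2 e he) (hν2 _ ht2) (hν2 _ hh2)
            exact_mod_cast hres
        have h3le : 3 ≤ 3 * G.c0 (H 2) + G.c1 (H 2) := three_le_of_all_bot hH2 hbot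
        have hP2' : (3:ℤ) ≤ P 2 := by
          simp only [hPdef, if_pos hH2]
          exact_mod_cast h3le
        have hsub12 : ({1, 2} : Finset ℕ) ⊆ J := by
          intro j hj
          simp only [Finset.mem_insert, Finset.mem_singleton] at hj
          rcases hj with rfl | rfl
          exacts [h1J, h2J]
        have hle : ∑ j ∈ ({1,2} : Finset ℕ), P j ≤ ∑ j ∈ J, P j :=
          Finset.sum_le_sum_of_subset_of_nonneg hsub12 (fun j hj _ => hPnonneg j hj)
        rw [Finset.sum_insert (by decide), Finset.sum_singleton] at hle
        have := hPge1 1 hH1ne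
        linarith
    · rw [Finset.not_nonempty_iff_eq_empty] at hH2
      have hmult1' : ∀ e ∈ H 1, mult e = 1 := by
        intro e he
        have h1 : 1 ≤ mult e := (Finset.mem_filter.mp he).2
        have h2 : ¬ (2 ≤ mult e) := by
          intro hcontra
          have hmem : e ∈ H 2 :=
            Finset.mem_filter.mpr ⟨(Finset.mem_filter.mp he).1, hcontra⟩
          rw [hH2] at hmem
          exact absurd hmem (Finset.notMem_empty e)
        omega
      have hν1 : ∀ w ∈ G.verts (H 1), ν w = 1 := by
        intro w hw
        rw [hνlv w (hvertsW 1 hw)]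
        simp only [hlvdef]
        have hfil : J.filter (fun j => w ∈ G.verts (H j)) = {1} := by
          ext j
          simp only [Finset.mem_filter, Finset.mem_singleton]
          constructor
          · rintro ⟨hjJ, hjw⟩
            rw [hJdef, Finset.mem_Icc] at hjJ
            by_contra hne'
            have h2lej : 2 ≤ j := by omega
            have hsub := hHanti h2lej
            rw [hH2] at hsub
            obtain ⟨e, he, _⟩ := mem_verts_iff.mp hjw
            exact absurd (hsub he) (Finset.notMem_empty e)
          · rintro rfl
            exact ⟨h1J, hw⟩
        rw [hfil]
        decide
      have hbot : ∀ v, G.gainGroup (H 1) v = ⊥ := by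
        refine fun v => gainGroup_eq_bot_of_pot σ (1 : ZMod k)
          (fun g hg => by rwa [one_mul] at hg) ?_ v
        intro e he
        have hres := hkey 1 e (hHB 1 he) (hmult1' e he)
          (hν1 _ (mem_verts_iff.mpr ⟨e, he, Or.inl rfl⟩))
          (hν1 _ (mem_verts_iff.mpr ⟨e, he, Or.inr rfl⟩))
        exact_mod_cast hres
      have h3le : 3 ≤ 3 * G.c0 (H 1) + G.c1 (H 1) := three_le_of_all_bot hH1ne hbot
      have hP1' : (3:ℤ) ≤ P 1 := by
        simp only [hPdef, if_pos hH1ne]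
        exact_mod_cast h3le
      have hle : P 1 ≤ ∑ j ∈ J, P j := Finset.single_le_sum hPnonneg h1J
      linarith
  -- final chain
  have h1 : (C.card : ℤ) = ∑ j ∈ J, ((H j).card : ℤ) := by exact_mod_cast hHsum.symm
  have h2 : ∑ j ∈ J, ((H j).card : ℤ) ≤ ∑ j ∈ J, (2 * ((G.verts (H j)).card : ℤ) - P j) :=
    Finset.sum_le_sum (fun j _ => hstep j)
  rw [Finset.sum_sub_distrib, ← Finset.mul_sum] at h2
  have h3 : ∑ j ∈ J, ((G.verts (H j)).card : ℤ) = ∑ w ∈ W, (lv w : ℤ) := by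
    exact_mod_cast hvlv
  rw [h3] at h2
  have hnn : ((G.liftVerts C).card : ℤ) = ∑ w ∈ W, (ν w : ℤ) := by exact_mod_cast hnusum
  rw [hnn]
  linarith

end CGraph

/-- For `k ≥ 3` prime, a `ℤ/kℤ`-colored graph is cone-Laman iff its
lift `G̃` (which has `ñ = kn` vertices and `km` edges, so `2ñ - k` edges means
`m = 2n - 1`) is Laman-sparse and `m = 2n - 1`. -/
theorem coneLaman_iff_lift_lamanSparse (k : ℕ) (hp : Nat.Prime k) (hk : 3 ≤ k)
    (G : CGraph (ZMod k)) :
    G.ConeLaman ↔ ((G.m : ℤ) = 2 * (G.n : ℤ) - 1 ∧ G.LiftLamanSparse) := by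
  constructor
  · intro h
    exact ⟨h.1, CGraph.sparse_of_cone hp hk h.2⟩
  · intro h
    exact ⟨h.1, fun S hS => CGraph.cone_of_sparse hk h.2 S hS⟩
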